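/- (Existence of reduced representatives) Every positive definite integral ternary quadratic form is equivalent to a reduced positive definite integral ternary quadratic form. -/

import Mathlib

/-- An integral ternary quadratic form `f = Σ_{1 ≤ i ≤ j ≤ 3} aᵢⱼ Xᵢ Xⱼ`,
recorded by its six coefficients. -/
structure TQF where
  a11 : ℤ
  a22 : ℤ
  a33 : ℤ
  a12 : ℤ
  a13 : ℤ
  a23 : ℤ

namespace TQF

/-- The value of the form at `x ∈ ℤ³`. -/
def eval (f : TQF) (x : Fin 3 → ℤ) : ℤ :=
  f.a11 * x 0 ^ 2 + f.a22 * x 1 ^ 2 + f.a33 * x 2 ^ 2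
    + f.a12 * x 0 * x 1 + f.a13 * x 0 * x 2 + f.a23 * x 1 * x 2

/-- Positive definiteness: `f(x) > 0` for every nonzero `x ∈ ℤ³`. -/
def PosDef (f : TQF) : Prop := ∀ x : Fin 3 → ℤ, x ≠ 0 → 0 < f.eval x

/-- The (rational, symmetric) Gram matrix of `f`. -/
def gram (f : TQF) : Matrix (Fin 3) (Fin 3) ℚ :=
  !![(f.a11 : ℚ), (f.a12 : ℚ) / 2, (f.a13 : ℚ) / 2;
     (f.a12 : ℚ) / 2, (f.a22 : ℚ), (f.a23 : ℚ) / 2;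
     (f.a13 : ℚ) / 2, (f.a23 : ℚ) / 2, (f.a33 : ℚ)]

/-- Integral equivalence of ternary forms: `f(Tx) = g(x)` for some `T ∈ GL₃(ℤ)`. -/
def EquivForm (f g : TQF) : Prop :=
  ∃ T : Matrix (Fin 3) (Fin 3) ℤ, IsUnit T.det ∧ ∀ x : Fin 3 → ℤ, f.eval (T.mulVec x) = g.eval x

/-- `f` represents a value `≤ t` by `k` linearly independent vectors of `ℤ³`. -/
def MinBound (f : TQF) (k : ℕ) (t : ℤ) : Prop :=
  ∃ v : Fin k → (Fin 3 → ℤ), LinearIndependent ℤ v ∧ ∀ i, f.eval (v i) ≤ t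

/-- `t` is the `k`-th successive minimum of `f`: the least integer `t` such that there
are `k` linearly independent vectors `x ∈ ℤ³` with `f(x) ≤ t`. -/
def IsSuccMin (f : TQF) (k : ℕ) (t : ℤ) : Prop :=
  f.MinBound k t ∧ ∀ t' : ℤ, f.MinBound k t' → t ≤ t'

/-- The representation number `r(f, ℓ) = #{x ∈ ℤ³ : f(x) = ℓ}`. -/
noncomputable def repNumber (f : TQF) (ℓ : ℤ) : ℕ :=
  {x : Fin 3 → ℤ | f.eval x = ℓ}.ncard

/-- `f` is reduced (Eichler/Seeber reduction conditions). -/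
def Reduced (f : TQF) : Prop :=
  (∀ x : Fin 3 → ℤ, Int.gcd (x 0) (Int.gcd (x 1) (x 2)) = 1 → f.a11 ≤ f.eval x) ∧
  (∀ x : Fin 3 → ℤ, Int.gcd (x 1) (x 2) = 1 → f.a22 ≤ f.eval x) ∧
  (∀ x : Fin 3 → ℤ, (x 2).natAbs = 1 → f.a33 ≤ f.eval x) ∧
  0 ≤ f.a12 ∧ 0 ≤ f.a13 ∧ ((f.a12 = 0 ∨ f.a13 = 0) → 0 ≤ f.a23) ∧
  (f.a11 = f.a22 → |f.a23| ≤ f.a13) ∧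
  (f.a22 = f.a33 → f.a13 ≤ f.a12)

end TQF

namespace TQF

def polar (f : TQF) (u v : Fin 3 → ℤ) : ℤ :=
  2*f.a11*(u 0)*(v 0) + 2*f.a22*(u 1)*(v 1) + 2*f.a33*(u 2)*(v 2)
  + f.a12*(u 0 * v 1 + u 1 * v 0) + f.a13*(u 0 * v 2 + u 2 * v 0) + f.a23*(u 1 * v 2 + u 2 * v 1)

def col (T : Matrix (Fin 3) (Fin 3) ℤ) (j : Fin 3) : Fin 3 → ℤ := ![T 0 j, T 1 j, T 2 j]

def transform (f : TQF) (T : Matrix (Fin 3) (Fin 3) ℤ) : TQF where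
  a11 := f.eval (col T 0)
  a22 := f.eval (col T 1)
  a33 := f.eval (col T 2)
  a12 := f.polar (col T 0) (col T 1)
  a13 := f.polar (col T 0) (col T 2)
  a23 := f.polar (col T 1) (col T 2)

lemma transform_eval (f : TQF) (T : Matrix (Fin 3) (Fin 3) ℤ) (x : Fin 3 → ℤ) :
    (f.transform T).eval x = f.eval (T.mulVec x) := by
  simp only [transform, col, eval, polar, Matrix.mulVec, dotProduct, Fin.sum_univ_three,
    Matrix.cons_val_zero, Matrix.cons_val_one, Matrix.head_cons, Matrix.cons_val_two,
    Matrix.tail_cons]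
  ring

lemma equivForm_refl (f : TQF) : f.EquivForm f :=
  ⟨1, by simp, fun x => by rw [Matrix.one_mulVec]⟩

lemma equivForm_transform {f g : TQF} (h : f.EquivForm g) {T : Matrix (Fin 3) (Fin 3) ℤ}
    (hT : IsUnit T.det) : f.EquivForm (g.transform T) := by
  obtain ⟨S, hS, hSe⟩ := h
  refine ⟨S * T, by rw [Matrix.det_mul]; exact hS.mul hT, fun x => ?_⟩
  rw [← Matrix.mulVec_mulVec, hSe, transform_eval]

lemma posDef_of_equivForm {f g : TQF} (hf : f.PosDef) (h : f.EquivForm g) : g.PosDef := by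
  obtain ⟨T, hT, hTe⟩ := h
  intro x hx
  rw [← hTe]
  refine hf _ fun hz => hx ?_
  have := Matrix.invertibleOfIsUnitDet T hT
  calc x = (⅟T * T).mulVec x := by rw [invOf_mul_self, Matrix.one_mulVec]
  _ = (⅟T).mulVec (T.mulVec x) := (Matrix.mulVec_mulVec ..).symm
  _ = 0 := by rw [hz, Matrix.mulVec_zero]

lemma ne_zero_vec (a b c : ℤ) (h : ¬(a = 0 ∧ b = 0 ∧ c = 0)) : (![a,b,c] : Fin 3 → ℤ) ≠ 0 := by
  intro hz
  exact h ⟨congrFun hz 0, congrFun hz 1, congrFun hz 2⟩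

lemma posDef_bounds {g : TQF} (hg : g.PosDef) :
    1 ≤ g.a11 ∧ 1 ≤ g.a22 ∧ 1 ≤ g.a33 ∧ g.a12 < g.a11 + g.a22 ∧ g.a13 < g.a11 + g.a33
      ∧ g.a23 < g.a22 + g.a33 := by
  have h1 := hg ![1,0,0] (ne_zero_vec _ _ _ (by simp))
  have h2 := hg ![0,1,0] (ne_zero_vec _ _ _ (by simp))
  have h3 := hg ![0,0,1] (ne_zero_vec _ _ _ (by simp))
  have h4 := hg ![1,-1,0] (ne_zero_vec _ _ _ (by simp))
  have h5 := hg ![1,0,-1] (ne_zero_vec _ _ _ (by simp))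
  have h6 := hg ![0,1,-1] (ne_zero_vec _ _ _ (by simp))
  simp [eval] at h1 h2 h3 h4 h5 h6
  refine ⟨by linarith, by linarith, by linarith, by linarith, by linarith, by linarith⟩

lemma exists_unimodular_col0 (v : Fin 3 → ℤ) (h : Int.gcd (v 0) (Int.gcd (v 1) (v 2)) = 1) :
    ∃ T : Matrix (Fin 3) (Fin 3) ℤ, IsUnit T.det ∧ col T 0 = v := by
  set d : ℤ := (Int.gcd (v 1) (v 2) : ℤ) with hd
  by_cases hd0 : d = 0
  · have hone : (v 0).natAbs = 1 := by
      rw [hd0, Int.gcd_zero_right] at h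
      exact h
    refine ⟨!![v 0, 0, 0; v 1, 1, 0; v 2, 0, 1], ?_, ?_⟩
    · rw [Matrix.det_fin_three]
      norm_num
      rcases Int.natAbs_eq_iff.mp hone with h' | h' <;> simp [h']
    · funext i; fin_cases i <;> simp [col]
  · set p : ℤ := Int.gcdA (v 1) (v 2) with hp
    set q : ℤ := Int.gcdB (v 1) (v 2) with hq
    have hpq : d = v 1 * p + v 2 * q := Int.gcd_eq_gcd_ab (v 1) (v 2)
    set α : ℤ := Int.gcdA (v 0) d with hα
    set β : ℤ := Int.gcdB (v 0) d with hβ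
    have hab : (1 : ℤ) = v 0 * α + d * β := by
      have := Int.gcd_eq_gcd_ab (v 0) d
      rwa [show Int.gcd (v 0) d = 1 from by rw [hd]; exact_mod_cast h, Nat.cast_one] at this
    set b1 : ℤ := v 1 / d with hb1
    set b2 : ℤ := v 2 / d with hb2
    have hv1 : v 1 = d * b1 := (Int.mul_ediv_cancel' (by exact_mod_cast Int.gcd_dvd_left (v 1) (v 2))).symm
    have hv2 : v 2 = d * b2 := (Int.mul_ediv_cancel' (by exact_mod_cast Int.gcd_dvd_right (v 1) (v 2))).symm
    have hbpq : b1 * p + b2 * q = 1 := by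
      have hh : d * 1 = d * (b1 * p + b2 * q) := by linear_combination hpq + p * hv1 + q * hv2
      have := mul_left_cancel₀ hd0 hh
      linarith
    refine ⟨!![v 0, -β, 0; v 1, α*b1, -q; v 2, α*b2, p], ?_, ?_⟩
    · rw [Matrix.det_fin_three]
      norm_num [Matrix.vecHead, Matrix.vecTail, Matrix.cons_val_two]
      have hdet : v 0 * (α * b1) * p + v 0 * q * (α * b2) + β * v 1 * p + β * q * v 2 = 1 := by
        linear_combination (v 0 * α + d * β) * hbpq + β * p * hv1 + β * q * hv2 - hab
      rw [hdet]
      exact isUnit_one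
    · funext i; fin_cases i <;> simp [col]

end TQF

namespace TQF

lemma ext' {a b : TQF} (h1 : a.a11 = b.a11) (h2 : a.a22 = b.a22) (h3 : a.a33 = b.a33)
    (h4 : a.a12 = b.a12) (h5 : a.a13 = b.a13) (h6 : a.a23 = b.a23) : a = b := by
  cases a; cases b; simp_all

lemma eval_e0 (f : TQF) : f.eval ![1,0,0] = f.a11 := by simp [eval]
lemma eval_e1 (f : TQF) : f.eval ![0,1,0] = f.a22 := by simp [eval]

lemma transform_D1 (g : TQF) : g.transform !![(-1:ℤ),0,0;0,1,0;0,0,1]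
    = ⟨g.a11, g.a22, g.a33, -g.a12, -g.a13, g.a23⟩ := by
  refine ext' ?_ ?_ ?_ ?_ ?_ ?_ <;> simp [transform, col, eval, polar, Matrix.vecHead, Matrix.vecTail]

lemma transform_D2 (g : TQF) : g.transform !![(1:ℤ),0,0;0,-1,0;0,0,1]
    = ⟨g.a11, g.a22, g.a33, -g.a12, g.a13, -g.a23⟩ := by
  refine ext' ?_ ?_ ?_ ?_ ?_ ?_ <;> simp [transform, col, eval, polar, Matrix.vecHead, Matrix.vecTail]

lemma transform_D3 (g : TQF) : g.transform !![(1:ℤ),0,0;0,1,0;0,0,-1]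
    = ⟨g.a11, g.a22, g.a33, g.a12, -g.a13, -g.a23⟩ := by
  refine ext' ?_ ?_ ?_ ?_ ?_ ?_ <;> simp [transform, col, eval, polar, Matrix.vecHead, Matrix.vecTail]

lemma transform_S12 (g : TQF) : g.transform !![(0:ℤ),1,0;1,0,0;0,0,1]
    = ⟨g.a22, g.a11, g.a33, g.a12, g.a23, g.a13⟩ := by
  refine ext' ?_ ?_ ?_ ?_ ?_ ?_ <;> simp [transform, col, eval, polar, Matrix.vecHead, Matrix.vecTail]

lemma transform_S12n (g : TQF) : g.transform !![(0:ℤ),-1,0;-1,0,0;0,0,1]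
    = ⟨g.a22, g.a11, g.a33, g.a12, -g.a23, -g.a13⟩ := by
  refine ext' ?_ ?_ ?_ ?_ ?_ ?_ <;> simp [transform, col, eval, polar, Matrix.vecHead, Matrix.vecTail]

lemma transform_S23 (g : TQF) : g.transform !![(1:ℤ),0,0;0,0,1;0,1,0]
    = ⟨g.a11, g.a33, g.a22, g.a13, g.a12, g.a23⟩ := by
  refine ext' ?_ ?_ ?_ ?_ ?_ ?_ <;> simp [transform, col, eval, polar, Matrix.vecHead, Matrix.vecTail]

lemma det_D1 : IsUnit (!![(-1:ℤ),0,0;0,1,0;0,0,1]).det := by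
  rw [Matrix.det_fin_three]; norm_num [Matrix.cons_val_two, Matrix.vecHead, Matrix.vecTail]
lemma det_D2 : IsUnit (!![(1:ℤ),0,0;0,-1,0;0,0,1]).det := by
  rw [Matrix.det_fin_three]; norm_num [Matrix.cons_val_two, Matrix.vecHead, Matrix.vecTail]
lemma det_D3 : IsUnit (!![(1:ℤ),0,0;0,1,0;0,0,-1]).det := by
  rw [Matrix.det_fin_three]; norm_num [Matrix.cons_val_two, Matrix.vecHead, Matrix.vecTail]
lemma det_S12 : IsUnit (!![(0:ℤ),1,0;1,0,0;0,0,1]).det := by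
  rw [Matrix.det_fin_three]; norm_num [Matrix.cons_val_two, Matrix.vecHead, Matrix.vecTail]
lemma det_S12n : IsUnit (!![(0:ℤ),-1,0;-1,0,0;0,0,1]).det := by
  rw [Matrix.det_fin_three]; norm_num [Matrix.cons_val_two, Matrix.vecHead, Matrix.vecTail]
lemma det_S23 : IsUnit (!![(1:ℤ),0,0;0,0,1;0,1,0]).det := by
  rw [Matrix.det_fin_three]; norm_num [Matrix.cons_val_two, Matrix.vecHead, Matrix.vecTail]

end TQF

/-- **Existence of reduced representatives.** Every positive definite integral ternary
quadratic form is integrally equivalent to a reduced one. -/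
theorem exists_reduced_representative (f : TQF) (hf : f.PosDef) :
    ∃ g : TQF, g.PosDef ∧ g.Reduced ∧ f.EquivForm g := by
  -- successive minimization of the diagonal
  obtain ⟨m1, ⟨g1, hg1E, hg1⟩, hm1⟩ :=
    Int.exists_least_of_bdd (P := fun z => ∃ g, f.EquivForm g ∧ g.a11 = z)
      ⟨1, by rintro z ⟨g, hg, rfl⟩; exact (TQF.posDef_bounds (TQF.posDef_of_equivForm hf hg)).1⟩
      ⟨f.a11, f, TQF.equivForm_refl f, rfl⟩
  have lbdd2 : ∀ z : ℤ, (∃ g, f.EquivForm g ∧ g.a11 = m1 ∧ g.a22 = z) → 1 ≤ z := by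
    rintro z ⟨g, hg, -, rfl⟩
    exact (TQF.posDef_bounds (TQF.posDef_of_equivForm hf hg)).2.1
  obtain ⟨m2, ⟨g2, hg2E, hg2a, hg2⟩, hm2⟩ :=
    Int.exists_least_of_bdd (P := fun z => ∃ g, f.EquivForm g ∧ g.a11 = m1 ∧ g.a22 = z)
      ⟨1, lbdd2⟩ ⟨g1.a22, g1, hg1E, hg1, rfl⟩
  have lbdd3 : ∀ z : ℤ, (∃ g, f.EquivForm g ∧ g.a11 = m1 ∧ g.a22 = m2 ∧ g.a33 = z) → 1 ≤ z := by
    rintro z ⟨g, hg, -, -, rfl⟩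
    exact (TQF.posDef_bounds (TQF.posDef_of_equivForm hf hg)).2.2.1
  obtain ⟨m3, ⟨g3, hg3E, hg3a, hg3b, hg3⟩, hm3⟩ :=
    Int.exists_least_of_bdd
      (P := fun z => ∃ g, f.EquivForm g ∧ g.a11 = m1 ∧ g.a22 = m2 ∧ g.a33 = z)
      ⟨1, lbdd3⟩ ⟨g2.a33, g2, hg2E, hg2a, hg2, rfl⟩
  -- successive maximization of the off-diagonal
  have bdd1 : ∀ z : ℤ, (∃ g, f.EquivForm g ∧ g.a11 = m1 ∧ g.a22 = m2 ∧ g.a33 = m3 ∧ g.a12 = z)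
      → z ≤ m1 + m2 := by
    rintro z ⟨g, hg, h1, h2, -, rfl⟩
    have := (TQF.posDef_bounds (TQF.posDef_of_equivForm hf hg)).2.2.2.1
    omega
  obtain ⟨M1, ⟨g4, hg4E, hg4a, hg4b, hg4c, hg4⟩, hM1⟩ :=
    Int.exists_greatest_of_bdd
      (P := fun z => ∃ g, f.EquivForm g ∧ g.a11 = m1 ∧ g.a22 = m2 ∧ g.a33 = m3 ∧ g.a12 = z)
      ⟨m1 + m2, bdd1⟩
      ⟨g3.a12, g3, hg3E, hg3a, hg3b, hg3, rfl⟩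
  have bdd2 : ∀ z : ℤ, (∃ g, f.EquivForm g ∧ g.a11 = m1 ∧ g.a22 = m2 ∧ g.a33 = m3
      ∧ g.a12 = M1 ∧ g.a13 = z) → z ≤ m1 + m3 := by
    rintro z ⟨g, hg, h1, -, h3, -, rfl⟩
    have := (TQF.posDef_bounds (TQF.posDef_of_equivForm hf hg)).2.2.2.2.1
    omega
  obtain ⟨M2, ⟨g5, hg5E, hg5a, hg5b, hg5c, hg5d, hg5⟩, hM2⟩ :=
    Int.exists_greatest_of_bdd
      (P := fun z => ∃ g, f.EquivForm g ∧ g.a11 = m1 ∧ g.a22 = m2 ∧ g.a33 = m3 ∧ g.a12 = M1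
        ∧ g.a13 = z)
      ⟨m1 + m3, bdd2⟩
      ⟨g4.a13, g4, hg4E, hg4a, hg4b, hg4c, hg4, rfl⟩
  have bdd3 : ∀ z : ℤ, (∃ g, f.EquivForm g ∧ g.a11 = m1 ∧ g.a22 = m2 ∧ g.a33 = m3
      ∧ g.a12 = M1 ∧ g.a13 = M2 ∧ g.a23 = z) → z ≤ m2 + m3 := by
    rintro z ⟨g, hg, -, h2, h3, -, -, rfl⟩
    have := (TQF.posDef_bounds (TQF.posDef_of_equivForm hf hg)).2.2.2.2.2
    omega
  obtain ⟨M3, ⟨g, hgE, h11, h22, h33, h12, h13, h23⟩, hM3⟩ :=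
    Int.exists_greatest_of_bdd
      (P := fun z => ∃ g, f.EquivForm g ∧ g.a11 = m1 ∧ g.a22 = m2 ∧ g.a33 = m3 ∧ g.a12 = M1
        ∧ g.a13 = M2 ∧ g.a23 = z)
      ⟨m2 + m3, bdd3⟩
      ⟨g5.a23, g5, hg5E, hg5a, hg5b, hg5c, hg5d, hg5, rfl⟩
  refine ⟨g, TQF.posDef_of_equivForm hf hgE, ⟨?_, ?_, ?_, ?_, ?_, ?_, ?_, ?_⟩, hgE⟩
  · -- a11 is minimal over primitive vectors
    intro x hx
    obtain ⟨T, hT, hcol⟩ := TQF.exists_unimodular_col0 x hx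
    have h := hm1 _ ⟨g.transform T, TQF.equivForm_transform hgE hT, rfl⟩
    have he : (g.transform T).a11 = g.eval x := by
      show g.eval (TQF.col T 0) = g.eval x
      rw [hcol]
    rw [h11]; rw [he] at h; exact h
  · -- a22 minimality
    intro x hx
    have h1 : (1:ℤ) = x 1 * Int.gcdA (x 1) (x 2) + x 2 * Int.gcdB (x 1) (x 2) := by
      have := Int.gcd_eq_gcd_ab (x 1) (x 2)
      rwa [hx, Nat.cast_one] at this
    set T := !![1, x 0, 0; 0, x 1, -Int.gcdB (x 1) (x 2); 0, x 2, Int.gcdA (x 1) (x 2)] with hTd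
    have hdet : IsUnit T.det := by
      rw [hTd, Matrix.det_fin_three]
      norm_num [Matrix.vecHead, Matrix.vecTail, Matrix.cons_val_two]
      rw [show x 1 * (x 1).gcdA (x 2) + (x 1).gcdB (x 2) * x 2 = 1 by linarith]
      exact isUnit_one
    have hc0 : TQF.col T 0 = ![1,0,0] := by
      funext i; fin_cases i <;> simp [TQF.col, hTd, Matrix.vecHead, Matrix.vecTail]
    have hc1 : TQF.col T 1 = x := by
      funext i; fin_cases i <;> simp [TQF.col, hTd, Matrix.vecHead, Matrix.vecTail]
    have h := hm2 _ ⟨g.transform T, TQF.equivForm_transform hgE hdet, ?_, rfl⟩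
    · have he : (g.transform T).a22 = g.eval x := by
        show g.eval (TQF.col T 1) = g.eval x
        rw [hc1]
      rw [h22]; rw [he] at h; exact h
    · show g.eval (TQF.col T 0) = m1
      rw [hc0, TQF.eval_e0, h11]
  · -- a33 minimality
    intro x hx
    set T := !![1, 0, x 0; 0, 1, x 1; 0, 0, x 2] with hTd
    have hdet : IsUnit T.det := by
      rw [hTd, Matrix.det_fin_three]
      norm_num [Matrix.vecHead, Matrix.vecTail]
      rcases Int.natAbs_eq_iff.mp hx with h' | h' <;> simp [h']
    have hc0 : TQF.col T 0 = ![1,0,0] := by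
      funext i; fin_cases i <;> simp [TQF.col, hTd, Matrix.vecHead, Matrix.vecTail]
    have hc1 : TQF.col T 1 = ![0,1,0] := by
      funext i; fin_cases i <;> simp [TQF.col, hTd, Matrix.vecHead, Matrix.vecTail]
    have hc2 : TQF.col T 2 = x := by
      funext i; fin_cases i <;> simp [TQF.col, hTd, Matrix.vecHead, Matrix.vecTail]
    have h := hm3 _ ⟨g.transform T, TQF.equivForm_transform hgE hdet, ?_, ?_, rfl⟩
    · have he : (g.transform T).a33 = g.eval x := by
        show g.eval (TQF.col T 2) = g.eval x
        rw [hc2]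
      rw [h33]; rw [he] at h; exact h
    · show g.eval (TQF.col T 0) = m1
      rw [hc0, TQF.eval_e0, h11]
    · show g.eval (TQF.col T 1) = m2
      rw [hc1, TQF.eval_e1, h22]
  · -- 0 ≤ a12
    have h := hM1 ((g.transform !![(-1:ℤ),0,0;0,1,0;0,0,1]).a12)
      ⟨_, TQF.equivForm_transform hgE TQF.det_D1,
        by rw [TQF.transform_D1]; exact h11, by rw [TQF.transform_D1]; exact h22,
        by rw [TQF.transform_D1]; exact h33, rfl⟩
    rw [TQF.transform_D1] at h
    simp only at h
    omega
  · -- 0 ≤ a13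
    have h := hM2 ((g.transform !![(1:ℤ),0,0;0,1,0;0,0,-1]).a13)
      ⟨_, TQF.equivForm_transform hgE TQF.det_D3,
        by rw [TQF.transform_D3]; exact h11, by rw [TQF.transform_D3]; exact h22,
        by rw [TQF.transform_D3]; exact h33, by rw [TQF.transform_D3]; exact h12, rfl⟩
    rw [TQF.transform_D3] at h
    simp only at h
    omega
  · -- a12 = 0 ∨ a13 = 0 → 0 ≤ a23
    rintro (h0 | h0)
    · have h := hM3 ((g.transform !![(1:ℤ),0,0;0,-1,0;0,0,1]).a23)
        ⟨_, TQF.equivForm_transform hgE TQF.det_D2,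
          by rw [TQF.transform_D2]; exact h11, by rw [TQF.transform_D2]; exact h22,
          by rw [TQF.transform_D2]; exact h33,
          by rw [TQF.transform_D2]; show -g.a12 = M1; omega,
          by rw [TQF.transform_D2]; exact h13, rfl⟩
      rw [TQF.transform_D2] at h
      simp only at h
      omega
    · have h := hM3 ((g.transform !![(1:ℤ),0,0;0,1,0;0,0,-1]).a23)
        ⟨_, TQF.equivForm_transform hgE TQF.det_D3,
          by rw [TQF.transform_D3]; exact h11, by rw [TQF.transform_D3]; exact h22,
          by rw [TQF.transform_D3]; exact h33, by rw [TQF.transform_D3]; exact h12,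
          by rw [TQF.transform_D3]; show -g.a13 = M2; omega, rfl⟩
      rw [TQF.transform_D3] at h
      simp only at h
      omega
  · -- a11 = a22 → |a23| ≤ a13
    intro heq
    have hmm : m1 = m2 := by omega
    have hA := hM2 ((g.transform !![(0:ℤ),1,0;1,0,0;0,0,1]).a13)
      ⟨_, TQF.equivForm_transform hgE TQF.det_S12,
        by rw [TQF.transform_S12]; show g.a22 = m1; omega,
        by rw [TQF.transform_S12]; show g.a11 = m2; omega,
        by rw [TQF.transform_S12]; exact h33, by rw [TQF.transform_S12]; exact h12, rfl⟩
    have hB := hM2 ((g.transform !![(0:ℤ),-1,0;-1,0,0;0,0,1]).a13)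
      ⟨_, TQF.equivForm_transform hgE TQF.det_S12n,
        by rw [TQF.transform_S12n]; show g.a22 = m1; omega,
        by rw [TQF.transform_S12n]; show g.a11 = m2; omega,
        by rw [TQF.transform_S12n]; exact h33, by rw [TQF.transform_S12n]; exact h12, rfl⟩
    rw [TQF.transform_S12] at hA
    rw [TQF.transform_S12n] at hB
    simp only at hA hB
    rw [abs_le]
    omega
  · -- a22 = a33 → a13 ≤ a12
    intro heq
    have hmm : m2 = m3 := by omega
    have h := hM1 ((g.transform !![(1:ℤ),0,0;0,0,1;0,1,0]).a12)
      ⟨_, TQF.equivForm_transform hgE TQF.det_S23,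
        by rw [TQF.transform_S23]; exact h11,
        by rw [TQF.transform_S23]; show g.a33 = m2; omega,
        by rw [TQF.transform_S23]; show g.a22 = m3; omega, rfl⟩
    rw [TQF.transform_S23] at h
    simp only at h
    omega
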